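/- Shannon sampling uniqueness in one dimension: Let Ω > 0 and 0 < h ≤ π/Ω. If f, g ∈ L²(ℝ) are continuous functions whose Fourier transforms are supported in the interval [-Ω, Ω], and f(m h) = g(m h) for every integer m, then f = g. -/

import Mathlib

open MeasureTheory Topology Filter

noncomputable section

/-- Inverse Fourier transform on `ℝ` with the convention
`f(t) = (2π)⁻¹ ∫ F(ω) e^{iωt} dω`, so that a "Fourier transform supported in
`[-Ω, Ω]`" refers to the angular-frequency variable `ω`. -/
def invFourier1 (F : ℝ → ℂ) (t : ℝ) : ℂ :=
  (1 / (2 * Real.pi) : ℂ) * ∫ ω : ℝ, Complex.exp (Complex.I * ω * t) * F ω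

/-- If an integrable `D : ℝ → ℂ`, supported in a window `[a, a+T]`, kills all
characters of the circle of circumference `T`, then it kills every continuous
function vanishing at the window's endpoints. -/
lemma shannon_aux_circle (T a : ℝ) (hT : Fact (0 < T)) (D : ℝ → ℂ)
    (hD1 : Integrable D)
    (hDsupp : ∀ ω : ℝ, ω ∉ Set.Icc a (a + T) → D ω = 0)
    (hchar : ∀ n : ℤ,
      ∫ ω : ℝ, D ω * Complex.exp (2 * Real.pi * Complex.I * n * ω / T) = 0)
    (w : ℝ → ℂ) (hwc : Continuous w) (hwa : w a = 0) (hwb : w (a + T) = 0) :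
    ∫ ω : ℝ, D ω * w ω = 0 := by
  haveI := hT
  set W : C(AddCircle T, ℂ) := ⟨AddCircle.liftIco T a w,
    AddCircle.liftIco_continuous (by rw [hwa, hwb]) hwc.continuousOn⟩ with hWdef
  have hint : ∀ u : C(AddCircle T, ℂ),
      Integrable (fun ω : ℝ => D ω * u (ω : AddCircle T)) := by
    intro u
    have h1 : Integrable (fun ω : ℝ => u (ω : AddCircle T) * D ω) :=
      hD1.bdd_mul
        ((u.continuous.comp (AddCircle.continuous_mk' T)).aestronglyMeasurable)
        (Filter.Eventually.of_forall fun x => u.norm_coe_le_norm _)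
    exact h1.congr (Filter.Eventually.of_forall fun x => mul_comm _ _)
  set Lf : C(AddCircle T, ℂ) →ₗ[ℂ] ℂ :=
    { toFun := fun u => ∫ ω : ℝ, D ω * u (ω : AddCircle T)
      map_add' := fun u v => by
        simp only [ContinuousMap.add_apply, mul_add]
        exact integral_add (hint u) (hint v)
      map_smul' := fun c u => by
        simp only [ContinuousMap.smul_apply, smul_eq_mul, RingHom.id_apply]
        rw [← integral_const_mul]
        congr 1; funext ω; ring } with hLfdef
  have hDnorm : Integrable (fun ω : ℝ => ‖D ω‖) := hD1.norm
  set L : C(AddCircle T, ℂ) →L[ℂ] ℂ :=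
    LinearMap.mkContinuous Lf (∫ ω : ℝ, ‖D ω‖) (by
      intro u
      have hb : ∀ᵐ ω : ℝ, ‖D ω * u (ω : AddCircle T)‖ ≤ ‖D ω‖ * ‖u‖ := by
        refine Filter.Eventually.of_forall fun ω => ?_
        rw [norm_mul]
        exact mul_le_mul_of_nonneg_left (u.norm_coe_le_norm _) (norm_nonneg _)
      calc ‖Lf u‖ ≤ ∫ ω : ℝ, ‖D ω‖ * ‖u‖ :=
            norm_integral_le_of_norm_le (hDnorm.mul_const _) hb
        _ = (∫ ω : ℝ, ‖D ω‖) * ‖u‖ := integral_mul_const _ _) with hLdef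
  have hLapp : ∀ u : C(AddCircle T, ℂ), L u = ∫ ω : ℝ, D ω * u (ω : AddCircle T) :=
    fun u => rfl
  have hgen : ∀ u ∈ Set.range (@fourier T), L u = 0 := by
    rintro _ ⟨n, rfl⟩
    rw [hLapp, ← hchar n]
    congr 1; funext ω
    rw [fourier_coe_apply]
  have hspan : ∀ u ∈ Submodule.span ℂ (Set.range (@fourier T)), L u = 0 := by
    intro u hu
    induction hu using Submodule.span_induction with
    | mem x hx => exact hgen x hx
    | zero => simp
    | add x y _ _ hx hy => rw [map_add, hx, hy, add_zero]
    | smul c x _ hx => rw [L.map_smul, hx, smul_zero]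
  have hWmem : W ∈ closure
      ((Submodule.span ℂ (Set.range (@fourier T)) : Submodule ℂ _) : Set _) := by
    have h1 : W ∈ (Submodule.span ℂ (Set.range (@fourier T))).topologicalClosure := by
      rw [span_fourier_closure_eq_top]; trivial
    exact h1
  have hLW : L W = 0 := by
    have hclosed : IsClosed {u : C(AddCircle T, ℂ) | L u = 0} :=
      isClosed_eq L.continuous continuous_const
    exact closure_minimal (fun u hu => hspan u hu) hclosed hWmem
  have heq : ∀ ω : ℝ, D ω * w ω = D ω * W (ω : AddCircle T) := by
    intro ω
    rcases lt_or_ge ω a with hlt | hge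
    · rw [hDsupp ω (fun hm => absurd hm.1 (not_le.mpr hlt)), zero_mul, zero_mul]
    rcases lt_or_ge ω (a + T) with hlt2 | hge2
    · congr 1
      exact (AddCircle.liftIco_coe_apply ⟨hge, hlt2⟩).symm
    rcases eq_or_lt_of_le hge2 with heq2 | hlt3
    · have h1 : w ω = 0 := by rw [heq2] at hwb; exact hwb
      have h2 : W (ω : AddCircle T) = 0 := by
        have hcoe : ((ω : ℝ) : AddCircle T) = ((a : ℝ) : AddCircle T) := by
          rw [← heq2]; exact AddCircle.coe_add_period T a
        rw [hcoe]
        have : W ((a : ℝ) : AddCircle T) = w a :=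
          AddCircle.liftIco_coe_apply ⟨le_refl a, by linarith [hT.out]⟩
        rw [this, hwa]
      rw [h1, h2]
    · rw [hDsupp ω (fun hm => absurd hm.2 (not_le.mpr hlt3)), zero_mul, zero_mul]
  calc ∫ ω : ℝ, D ω * w ω = ∫ ω : ℝ, D ω * W (ω : AddCircle T) := by
        exact integral_congr_ae (Filter.Eventually.of_forall heq)
    _ = L W := (hLapp W).symm
    _ = 0 := hLW

/-- If an integrable `D` supported in `[-b, b]` kills every continuous function
supported in `(-b, b)`, then `D = 0` a.e. -/
lemma shannon_aux_ae (b : ℝ) (hb : 0 < b) (D : ℝ → ℂ) (hD1 : Integrable D)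
    (hDsupp : ∀ ω : ℝ, ω ∉ Set.Icc (-b) b → D ω = 0)
    (hkey : ∀ w : ℝ → ℂ, Continuous w → (∀ x : ℝ, x ∉ Set.Ioo (-b) b → w x = 0) →
      (∫ ω : ℝ, D ω * w ω) = 0) :
    ∀ᵐ ω : ℝ, D ω = 0 := by
  apply ae_eq_zero_of_integral_contDiff_smul_eq_zero hD1.locallyIntegrable
  intro g hgd hgs
  obtain ⟨C, hC⟩ := hgs.exists_bound_of_continuous hgd.continuous
  set χ : ℕ → ℝ → ℝ := fun n x => max 0 (min 1 ((n + 1) * (b - |x|))) with hχdef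
  have hχc : ∀ n, Continuous (χ n) := fun n =>
    continuous_const.max (continuous_const.min
      (continuous_const.mul (continuous_const.sub continuous_abs)))
  have hχ01 : ∀ n x, 0 ≤ χ n x ∧ χ n x ≤ 1 := by
    intro n x
    refine ⟨le_max_left _ _, ?_⟩
    exact max_le zero_le_one (le_trans (min_le_left _ _) le_rfl)
  set w : ℕ → ℝ → ℂ := fun n x => ((g x * χ n x : ℝ) : ℂ) with hwdef
  have hw0 : ∀ n, ∫ ω : ℝ, D ω * w n ω = 0 := by
    intro n
    apply hkey _ (Complex.continuous_ofReal.comp (hgd.continuous.mul (hχc n)))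
    intro x hx
    have hxb : b ≤ |x| := by
      by_contra hlt
      push_neg at hlt
      exact hx (abs_lt.mp hlt)
    have hz : χ n x = 0 := by
      have h1 : ((n : ℝ) + 1) * (b - |x|) ≤ 0 :=
        mul_nonpos_of_nonneg_of_nonpos (by positivity) (by linarith)
      have h2 : min 1 (((n : ℝ) + 1) * (b - |x|)) ≤ 0 :=
        le_trans (min_le_right _ _) h1
      simp only [hχdef]
      exact max_eq_left h2
    simp [hwdef, hz]
  have hmeas : ∀ n, AEStronglyMeasurable (fun ω : ℝ => D ω * w n ω) volume :=
    fun n => hD1.aestronglyMeasurable.mul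
      ((Complex.continuous_ofReal.comp (hgd.continuous.mul (hχc n))).aestronglyMeasurable)
  have hCnn : (0 : ℝ) ≤ C := le_trans (norm_nonneg _) (hC 0)
  have hbound : ∀ n, ∀ᵐ ω : ℝ, ‖D ω * w n ω‖ ≤ ‖D ω‖ * C := by
    intro n
    refine Filter.Eventually.of_forall fun ω => ?_
    rw [norm_mul]
    have h1 : ‖w n ω‖ ≤ C := by
      have : ‖w n ω‖ = |g ω| * |χ n ω| := by
        simp [hwdef, Complex.norm_real, abs_mul]
      rw [this]
      have h2 : |χ n ω| ≤ 1 := by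
        rw [abs_of_nonneg (hχ01 n ω).1]; exact (hχ01 n ω).2
      calc |g ω| * |χ n ω| ≤ C * 1 :=
            mul_le_mul (hC ω) h2 (abs_nonneg _) hCnn
        _ = C := mul_one C
    exact mul_le_mul_of_nonneg_left h1 (norm_nonneg _)
  have hbi : Integrable (fun ω : ℝ => ‖D ω‖ * C) := hD1.norm.mul_const _
  have hae : ∀ᵐ ω : ℝ, Filter.Tendsto (fun n => D ω * w n ω)
      Filter.atTop (𝓝 (D ω * (g ω : ℂ))) := by
    have h1 : ∀ᵐ ω : ℝ, |ω| ≠ b := by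
      have hsub : {ω : ℝ | |ω| = b} ⊆ {-b, b} := by
        intro x hx
        rcases abs_eq hb.le |>.mp hx with h | h
        · exact Or.inr h
        · exact Or.inl h
      have hz : volume {ω : ℝ | |ω| = b} = 0 :=
        measure_mono_null hsub ((Set.toFinite ({-b, b} : Set ℝ)).measure_zero volume)
      rw [MeasureTheory.ae_iff]
      convert hz using 2
      ext x
      simp
    filter_upwards [h1] with ω hω
    rcases lt_or_gt_of_ne hω with hlt | hgt
    · -- |ω| < b : eventually χ n ω = 1
      apply Filter.Tendsto.congr' _ tendsto_const_nhds
      rw [Filter.EventuallyEq, Filter.eventually_atTop]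
      have hpos : 0 < b - |ω| := sub_pos.mpr hlt
      refine ⟨⌈1 / (b - |ω|)⌉₊, fun n hn => ?_⟩
      have h3 : (1 : ℝ) / (b - |ω|) ≤ (n : ℝ) + 1 := by
        calc (1 : ℝ) / (b - |ω|) ≤ (⌈1 / (b - |ω|)⌉₊ : ℝ) := Nat.le_ceil _
          _ ≤ (n : ℝ) := by exact_mod_cast hn
          _ ≤ (n : ℝ) + 1 := by linarith
      rw [div_le_iff₀ hpos] at h3
      have hone : χ n ω = 1 := by
        simp only [hχdef]
        rw [min_eq_left (by linarith [mul_comm ((n : ℝ) + 1) (b - |ω|)] : (1:ℝ) ≤ ((n:ℝ)+1) * (b - |ω|))]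
        exact max_eq_right zero_le_one
      simp [hwdef, hone]
    · -- |ω| > b : D ω = 0
      have hD0 : D ω = 0 := by
        apply hDsupp
        intro hm
        have : |ω| ≤ b := abs_le.mpr ⟨hm.1, hm.2⟩
        linarith
      simp only [hD0, zero_mul]
      exact tendsto_const_nhds
  have htend := MeasureTheory.tendsto_integral_of_dominated_convergence
    (fun ω : ℝ => ‖D ω‖ * C) hmeas hbi hbound hae
  have h0 : Filter.Tendsto (fun _ : ℕ => (0 : ℂ)) Filter.atTop
      (𝓝 (∫ ω : ℝ, D ω * (g ω : ℂ))) := htend.congr hw0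
  have hfin : (∫ ω : ℝ, D ω * (g ω : ℂ)) = 0 :=
    tendsto_nhds_unique h0 tendsto_const_nhds
  rw [← hfin]
  congr 1
  funext x
  rw [Complex.real_smul, mul_comm]

/-- **Shannon sampling uniqueness in one dimension.**  If `f, g ∈ L²(ℝ)` are
continuous with Fourier transforms `F, G` supported in `[-Ω, Ω]` and their
samples on the grid `hℤ` with `0 < h ≤ π/Ω` coincide, then `f = g`. -/
theorem shannon_uniqueness_1d
    (Ω h : ℝ) (hΩ : 0 < Ω) (hh0 : 0 < h) (hh : h ≤ Real.pi / Ω)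
    (f g F G : ℝ → ℂ)
    (hF1 : Integrable F) (hG1 : Integrable G)
    (hFsupp : ∀ ω : ℝ, ω ∉ Set.Icc (-Ω) Ω → F ω = 0)
    (hGsupp : ∀ ω : ℝ, ω ∉ Set.Icc (-Ω) Ω → G ω = 0)
    (hf : f = invFourier1 F) (hg : g = invFourier1 G)
    (hfL2 : MemLp f 2 volume) (hgL2 : MemLp g 2 volume)
    (hfc : Continuous f) (hgc : Continuous g)
    (hsamp : ∀ m : ℤ, f (m * h) = g (m * h)) :
    f = g := by
  have hπ := Real.pi_pos
  set T : ℝ := 2 * Real.pi / h with hTdef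
  have hT : 0 < T := by positivity
  set a : ℝ := -(Real.pi / h) with hadef
  have haT : a + T = Real.pi / h := by
    rw [hadef, hTdef]; field_simp; ring
  have hΩle : Ω ≤ Real.pi / h := by
    rw [le_div_iff₀ hh0]
    calc Ω * h ≤ Ω * (Real.pi / Ω) := by
          exact mul_le_mul_of_nonneg_left hh hΩ.le
      _ = Real.pi := by field_simp
  set D : ℝ → ℂ := fun ω => F ω - G ω with hDdef
  have hD1 : Integrable D := hF1.sub hG1
  have hDsupp : ∀ ω : ℝ, ω ∉ Set.Icc (-Ω) Ω → D ω = 0 := by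
    intro ω hω
    simp [hDdef, hFsupp ω hω, hGsupp ω hω]
  have hexpint : ∀ (t : ℝ) (H : ℝ → ℂ), Integrable H →
      Integrable (fun ω : ℝ => Complex.exp (Complex.I * ω * t) * H ω) := by
    intro t H hH
    apply hH.bdd_mul (c := 1)
    · exact (Complex.continuous_exp.comp
        ((continuous_const.mul Complex.continuous_ofReal).mul continuous_const)).aestronglyMeasurable
    · refine Filter.Eventually.of_forall (fun ω => ?_)
      have : Complex.I * (ω : ℂ) * (t : ℂ) = ((ω * t : ℝ) : ℂ) * Complex.I := by
        push_cast; ring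
      rw [this, Complex.norm_exp_ofReal_mul_I]
  -- samples kill the characters
  have hchar : ∀ n : ℤ,
      ∫ ω : ℝ, D ω * Complex.exp (2 * Real.pi * Complex.I * n * ω / T) = 0 := by
    intro n
    have h1 := hsamp n
    rw [hf, hg] at h1
    unfold invFourier1 at h1
    have hc : (1 / (2 * Real.pi) : ℂ) ≠ 0 := by
      simp [Real.pi_ne_zero]
    have h2 := mul_left_cancel₀ hc h1
    have hhc : (h : ℂ) ≠ 0 := Complex.ofReal_ne_zero.mpr hh0.ne'
    have hpc : ((Real.pi : ℝ) : ℂ) ≠ 0 := Complex.ofReal_ne_zero.mpr Real.pi_ne_zero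
    have hexp : ∀ ω : ℝ, (2 * (Real.pi : ℂ) * Complex.I * (n : ℂ) * (ω : ℂ) / (T : ℂ))
        = Complex.I * (ω : ℂ) * (((n : ℝ) * h : ℝ) : ℂ) := by
      intro ω
      rw [hTdef]
      push_cast
      field_simp
    have h3 : (fun ω : ℝ => D ω * Complex.exp (2 * Real.pi * Complex.I * n * ω / T))
        = fun ω : ℝ => Complex.exp (Complex.I * ω * (((n : ℝ) * h : ℝ) : ℂ)) * F ω
          - Complex.exp (Complex.I * ω * (((n : ℝ) * h : ℝ) : ℂ)) * G ω := by
      funext ω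
      rw [hexp ω, hDdef]
      ring
    rw [h3, integral_sub (hexpint _ F hF1) (hexpint _ G hG1), sub_eq_zero]
    exact h2
  -- the key vanishing property
  haveI hTf : Fact (0 < T) := ⟨hT⟩
  have hkey : ∀ w : ℝ → ℂ, Continuous w →
      (∀ x : ℝ, x ∉ Set.Ioo (-Ω) Ω → w x = 0) → (∫ ω : ℝ, D ω * w ω) = 0 := by
    intro w hwc hwsupp
    have hale : a ≤ -Ω := by rw [hadef]; linarith [hΩle]
    have hanotin : a ∉ Set.Ioo (-Ω) Ω := fun hm => absurd hm.1 (not_lt.mpr hale)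
    have hbnotin : (a + T) ∉ Set.Ioo (-Ω) Ω := by
      rw [haT]
      intro hm
      linarith [hm.2, hΩle]
    apply shannon_aux_circle T a hTf D hD1 _ hchar w hwc
      (hwsupp a hanotin) (hwsupp (a + T) hbnotin)
    intro ω hω
    apply hDsupp
    intro hm
    apply hω
    constructor
    · exact le_trans hale hm.1
    · calc ω ≤ Ω := hm.2
        _ ≤ Real.pi / h := hΩle
        _ = a + T := haT.symm
  -- conclude D = 0 a.e.
  have hD0 : ∀ᵐ ω : ℝ, D ω = 0 := shannon_aux_ae Ω hΩ D hD1 hDsupp hkey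
  have hFG : ∀ᵐ ω : ℝ, F ω = G ω := by
    filter_upwards [hD0] with ω hω
    exact sub_eq_zero.mp hω
  -- final step
  funext t
  rw [hf, hg]
  unfold invFourier1
  congr 1
  apply integral_congr_ae
  filter_upwards [hFG] with ω hω
  rw [hω]
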